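/- For non-negative integers n and t with t ≤ n, the sum ∑_{k=0}^{t} q^{k(n−t)} / ((q^{−k};q)_k (q;q)_{t−k}) equals the q-binomial coefficient [n choose t]_q. -/

import Mathlib

open Finset

/-- The indeterminate `q` in the field of rational functions `ℚ(q)`. -/
noncomputable def q : RatFunc ℚ := RatFunc.X

/-- The q-shifted factorial `(a;q)_m = ∏_{l=0}^{m-1} (1 - a q^l)`. -/
noncomputable def qPoch (a : RatFunc ℚ) (m : ℕ) : RatFunc ℚ :=
  ∏ l ∈ Finset.range m, (1 - a * q ^ l)

lemma q_ne_zero : q ≠ 0 := RatFunc.X_ne_zero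

lemma q_pow_ne_one (n : ℕ) (hn : n ≠ 0) : q ^ n ≠ 1 := by
  intro h
  have h2 : (algebraMap (Polynomial ℚ) (RatFunc ℚ)) (Polynomial.X ^ n) = algebraMap _ _ 1 := by
    simpa [map_pow, RatFunc.algebraMap_X, q] using h
  have := RatFunc.algebraMap_injective ℚ h2
  have hd := congrArg Polynomial.natDegree this
  simp [Polynomial.natDegree_X_pow] at hd
  exact hn hd

lemma q_zpow_ne_one (z : ℤ) (hz : z ≠ 0) : q ^ z ≠ 1 := by
  rcases z.lt_or_lt_of_ne hz with hneg | hpos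
  · obtain ⟨n, rfl⟩ : ∃ n : ℕ, z = -(n:ℤ) := ⟨z.natAbs, by omega⟩
    rw [zpow_neg, zpow_natCast]
    exact fun h => q_pow_ne_one n (by omega) (inv_eq_one.mp h)
  · obtain ⟨n, rfl⟩ : ∃ n : ℕ, z = (n:ℤ) := ⟨z.natAbs, by omega⟩
    rw [zpow_natCast]
    exact q_pow_ne_one n (by omega)

lemma one_sub_zpow_ne (z : ℤ) (hz : z ≠ 0) : (1 : RatFunc ℚ) - q ^ z ≠ 0 :=
  sub_ne_zero.mpr (Ne.symm (q_zpow_ne_one z hz))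

lemma one_sub_pow_ne (j : ℕ) (hj : j ≠ 0) : (1 : RatFunc ℚ) - q ^ j ≠ 0 :=
  sub_ne_zero.mpr (Ne.symm (q_pow_ne_one j hj))

lemma p_ne_zero (s : ℕ) : qPoch q s ≠ 0 := by
  rw [qPoch]
  rw [Finset.prod_ne_zero_iff]
  intro l _
  have : (1 : RatFunc ℚ) - q * q ^ l = 1 - q ^ (l + 1) := by ring
  rw [this]
  exact one_sub_pow_ne (l+1) (by omega)

lemma c_ne_zero (k : ℕ) : qPoch (q ^ (-(k : ℤ))) k ≠ 0 := by
  rw [qPoch]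
  rw [Finset.prod_ne_zero_iff]
  intro l hl
  rw [Finset.mem_range] at hl
  have : q ^ (-(k : ℤ)) * q ^ l = q ^ ((l : ℤ) - k) := by
    rw [← zpow_natCast q l, ← zpow_add₀ q_ne_zero]
    congr 1; omega
  rw [this]
  exact one_sub_zpow_ne _ (by omega)

lemma p_succ (s : ℕ) : qPoch q (s+1) = qPoch q s * (1 - q ^ (s+1)) := by
  rw [qPoch, Finset.prod_range_succ, ← qPoch]
  ring

lemma c_succ (k : ℕ) :
    qPoch (q ^ (-((k:ℤ)+1))) (k+1) = (1 - q ^ (-((k:ℤ)+1))) * qPoch (q ^ (-(k:ℤ))) k := by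
  rw [qPoch, Finset.prod_range_succ', qPoch]
  rw [pow_zero, mul_one, mul_comm]
  congr 1
  apply Finset.prod_congr rfl
  intro l _
  congr 1
  rw [← zpow_natCast q (l+1), ← zpow_natCast q l, ← zpow_add₀ q_ne_zero, ← zpow_add₀ q_ne_zero]
  congr 1; push_cast; ring

lemma qPoch_shift (m t : ℕ) :
    qPoch (q ^ (m+1)) (t+1) = (1 - q ^ (m+1)) * qPoch (q ^ (m+2)) t := by
  rw [qPoch, Finset.prod_range_succ', qPoch]
  rw [pow_zero, mul_one, mul_comm]
  congr 1
  apply Finset.prod_congr rfl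
  intro l _
  congr 1
  ring

/-- The sum in the identity. -/
noncomputable def S (t m : ℕ) : RatFunc ℚ :=
  ∑ k ∈ Finset.range (t+1), q ^ (k*m) / (qPoch (q ^ (-(k : ℤ))) k * qPoch q (t-k))

private noncomputable def Gfun (t m : ℕ) : ℕ → RatFunc ℚ
  | 0 => 0
  | (j+1) => q ^ ((j+1)*(m+1)) / (qPoch (q ^ (-(j:ℤ))) j * qPoch q (t-j))

private noncomputable def Ffun (t m : ℕ) (k : ℕ) : RatFunc ℚ :=
  if k ≤ t then q ^ (k*(m+1)) / (qPoch (q ^ (-(k:ℤ))) k * qPoch q (t-k)) else 0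

lemma step (t m : ℕ) : S (t+1) m * (1 - q ^ (t+1)) = S t (m+1) * (1 - q ^ (m+1)) := by
  have hF : ∑ k ∈ Finset.range (t+2), Ffun t m k = S t (m+1) := by
    rw [Finset.sum_range_succ, Ffun, if_neg (by omega), add_zero, S]
    apply Finset.sum_congr rfl
    intro k hk
    rw [Finset.mem_range] at hk
    rw [Ffun, if_pos (by omega)]
  have hG : ∑ k ∈ Finset.range (t+2), Gfun t m k = q ^ (m+1) * S t (m+1) := by
    rw [Finset.sum_range_succ', S, Finset.mul_sum]
    have h0 : Gfun t m 0 = 0 := rfl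
    rw [h0, add_zero]
    apply Finset.sum_congr rfl
    intro j _
    show q ^ ((j+1)*(m+1)) / (qPoch (q ^ (-(j:ℤ))) j * qPoch q (t-j)) = _
    rw [show (j+1)*(m+1) = (m+1) + j*(m+1) by ring, pow_add, mul_div_assoc]
  have key : ∀ k ∈ Finset.range (t+2),
      q ^ (k*m) / (qPoch (q ^ (-(k : ℤ))) k * qPoch q (t+1-k)) * (1 - q ^ (t+1))
        = Ffun t m k - Gfun t m k := by
    intro k hk
    rw [Finset.mem_range] at hk
    match k with
    | 0 =>
      have hc0 : qPoch (q ^ (-((0:ℕ):ℤ))) 0 = 1 := by rw [qPoch]; simp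
      have hg0 : Gfun t m 0 = 0 := rfl
      rw [Ffun, if_pos (by omega), hg0, sub_zero, Nat.zero_mul, Nat.zero_mul,
        Nat.sub_zero, Nat.sub_zero, hc0, p_succ, pow_zero]
      have h4 := one_sub_pow_ne (t+1) (by omega)
      have h3 := p_ne_zero t
      field_simp
    | (j+1) =>
      have hj : j ≤ t := by omega
      have hinv : q ^ (-((j:ℤ)+1)) = (q ^ (j+1))⁻¹ := by
        rw [zpow_neg, ← zpow_natCast q (j+1)]
        congr 2
      set C := qPoch (q ^ (-(j:ℤ))) j with hCdef
      have h2 : C ≠ 0 := c_ne_zero j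
      have hcs : qPoch (q ^ (-((j+1:ℕ):ℤ))) (j+1) = (1 - (q ^ (j+1))⁻¹) * C := by
        rw [show (-((j+1:ℕ):ℤ)) = -((j:ℤ)+1) by omega, c_succ, hinv]
      have hG1 : Gfun t m (j+1) = q ^ ((j+1)*(m+1)) / (C * qPoch q (t-j)) := rfl
      have hq := pow_ne_zero (j+1) q_ne_zero
      have hA : (1:RatFunc ℚ) - q ^ (j+1) ≠ 0 := one_sub_pow_ne _ (by omega)
      have hkey : qPoch (q ^ (-((j+1:ℕ):ℤ))) (j+1) * q ^ (j+1) = -((1 - q ^ (j+1)) * C) := by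
        rw [hcs]
        field_simp
        ring
      have hcne : qPoch (q ^ (-((j+1:ℕ):ℤ))) (j+1) ≠ 0 := c_ne_zero (j+1)
      have hterm : ∀ x P : RatFunc ℚ, P ≠ 0 →
          x / (qPoch (q ^ (-((j+1:ℕ):ℤ))) (j+1) * P)
            = -(x * q ^ (j+1)) / ((1 - q ^ (j+1)) * (C * P)) := by
        intro x P hP
        rw [div_eq_div_iff (mul_ne_zero hcne hP) (mul_ne_zero hA (mul_ne_zero h2 hP))]
        linear_combination (x * P) * hkey
      rcases Nat.lt_or_ge j t with hjt | hjt
      · -- j + 1 ≤ t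
        obtain ⟨s, hs⟩ : ∃ s, t - j = s + 1 := ⟨t - j - 1, by omega⟩
        have hts : t - (j+1) = s := by omega
        have ht1 : t + 1 - (j+1) = s + 1 := by omega
        have h3 := p_ne_zero s
        have h4 := one_sub_pow_ne (s+1) (by omega)
        rw [Ffun, if_pos (by omega), hG1, ht1, hts, hs, p_succ,
          hterm _ _ (mul_ne_zero h3 h4), hterm _ _ h3]
        field_simp
        rw [show (j+1)*(m+1) = (j+1)*m + (j+1) by ring]
        rw [show t + 1 = (s+1) + (j+1) by omega]
        ring
      · -- j = t, k = t+1
        have hjt' : j = t := by omega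
        subst hjt'
        have ht0 : j + 1 - (j+1) = 0 := by omega
        have ht0' : j - j = 0 := by omega
        have hp0 : qPoch q 0 = 1 := by rw [qPoch]; simp
        rw [Ffun, if_neg (by omega), hG1, ht0, ht0', hp0,
          hterm _ _ (one_ne_zero)]
        field_simp
        rw [show (j+1)*(m+1) = (j+1)*m + (j+1) by ring]
        ring
  calc S (t+1) m * (1 - q ^ (t+1))
      = ∑ k ∈ Finset.range (t+2),
          q ^ (k*m) / (qPoch (q ^ (-(k : ℤ))) k * qPoch q (t+1-k)) * (1 - q ^ (t+1)) := by
        rw [S, Finset.sum_mul]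
    _ = ∑ k ∈ Finset.range (t+2), (Ffun t m k - Gfun t m k) := Finset.sum_congr rfl key
    _ = (∑ k ∈ Finset.range (t+2), Ffun t m k) - ∑ k ∈ Finset.range (t+2), Gfun t m k :=
        Finset.sum_sub_distrib _ _
    _ = S t (m+1) - q ^ (m+1) * S t (m+1) := by rw [hF, hG]
    _ = S t (m+1) * (1 - q ^ (m+1)) := by ring

lemma S_eq (t : ℕ) : ∀ m, S t m = qPoch (q ^ (m+1)) t / qPoch q t := by
  induction t with
  | zero =>
    intro m
    simp [S, qPoch]
  | succ t ih =>
    intro m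
    have hstep := step t m
    have ht1 := one_sub_pow_ne (t+1) (by omega)
    have hm1 := one_sub_pow_ne (m+1) (by omega)
    have hpt := p_ne_zero t
    have : S (t+1) m = S t (m+1) * (1 - q ^ (m+1)) / (1 - q ^ (t+1)) := by
      field_simp at hstep ⊢
      linear_combination hstep
    rw [this, ih (m+1), qPoch_shift, p_succ]
    rw [show m + 1 + 1 = m + 2 from rfl]
    field_simp

theorem sum_eq_qBinomial (n t : ℕ) (h : t ≤ n) :
    ∑ k ∈ Finset.range (t + 1),
        q ^ (k * (n - t)) / (qPoch (q ^ (-(k : ℤ))) k * qPoch q (t - k)) =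
      qPoch (q ^ (n - t + 1)) t / qPoch q t := by
  exact S_eq t (n - t)
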